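/- There exists a constant C > 0 such that for every ε ∈ (0, 1], every cubic Hermite interpolant P of F on [−ε, ε], and every a ∈ [−ε, ε], one has ‖P''(a) − (1/(2ε)) • (g₊'(0) − g₋'(0))‖ ≤ C. -/

import Mathlib

set_option maxHeartbeats 1000000

open Set

private lemma taylor_aux' {E : Type*} [NormedAddCommGroup E] [NormedSpace ℝ E]
    (g : ℝ → E) (hg : ContDiff ℝ 2 g) :
    ∃ M > 0, ∀ ε ∈ Set.Ioc (0:ℝ) 1,
      ‖deriv g ε - deriv g 0‖ ≤ M * ε ∧
      ‖deriv g (-ε) - deriv g 0‖ ≤ M * ε ∧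
      ‖g ε - g 0 - ε • deriv g 0‖ ≤ M * ε ^ 2 ∧
      ‖g (-ε) - g 0 + ε • deriv g 0‖ ≤ M * ε ^ 2 := by
  have hd1 : Differentiable ℝ g := hg.differentiable two_ne_zero
  have h1 : ContDiff ℝ 1 (deriv g) := by
    have h2 : ContDiff ℝ ((1:WithTop ℕ∞)+1) g := by
      exact_mod_cast hg
    exact_mod_cast (contDiff_succ_iff_deriv.mp h2).2.2
  have hcd : Continuous (deriv (deriv g)) := h1.continuous_deriv le_rfl
  have hdd : Differentiable ℝ (deriv g) := h1.differentiable one_ne_zero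
  obtain ⟨M, hM⟩ := (isCompact_Icc (a := (-1:ℝ)) (b := 1)).exists_bound_of_continuousOn
    hcd.continuousOn
  refine ⟨max M 1, lt_of_lt_of_le one_pos (le_max_right _ _), ?_⟩
  set M0 := max M 1 with hM0def
  have hM0pos : (0:ℝ) < M0 := lt_of_lt_of_le one_pos (le_max_right _ _)
  have lip : ∀ x ∈ Icc (-1:ℝ) 1, ∀ y ∈ Icc (-1:ℝ) 1,
      ‖deriv g y - deriv g x‖ ≤ M0 * |y - x| := by
    intro x hx y hy
    have := (convex_Icc (-1:ℝ) 1).norm_image_sub_le_of_norm_hasDerivWithin_le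
      (f := deriv g) (f' := deriv (deriv g)) (C := M0)
      (fun z hz => ((hdd z).hasDerivAt).hasDerivWithinAt)
      (fun z hz => le_trans (hM z hz) (le_max_left _ _)) hx hy
    simpa [Real.norm_eq_abs] using this
  intro ε hε
  obtain ⟨hε0, hε1⟩ := hε
  have hεm : (-ε) ∈ Icc (-1:ℝ) 1 := ⟨by linarith, by linarith⟩
  have hεp : ε ∈ Icc (-1:ℝ) 1 := ⟨by linarith, by linarith⟩
  have h0m : (0:ℝ) ∈ Icc (-1:ℝ) 1 := ⟨by norm_num, by norm_num⟩
  have hderivh : ∀ t : ℝ, HasDerivAt (fun t : ℝ => g t - t • deriv g 0)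
      (deriv g t - deriv g 0) t := by
    intro t
    have h2 : HasDerivAt (fun y : ℝ => y • deriv g 0) (deriv g 0) t := by
      simpa using (hasDerivAt_id t).smul_const (deriv g 0)
    exact ((hd1 t).hasDerivAt).sub h2
  refine ⟨?_, ?_, ?_, ?_⟩
  · simpa [abs_of_pos hε0] using lip 0 h0m ε hεp
  · simpa [abs_of_pos hε0] using lip 0 h0m (-ε) hεm
  · have key := (convex_Icc (0:ℝ) ε).norm_image_sub_le_of_norm_hasDerivWithin_le
      (f := fun t : ℝ => g t - t • deriv g 0) (f' := fun t => deriv g t - deriv g 0)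
      (C := M0 * ε)
      (fun z hz => (hderivh z).hasDerivWithinAt)
      (fun z hz => by
        have hz1 : z ∈ Icc (-1:ℝ) 1 := ⟨by linarith [hz.1], by linarith [hz.2]⟩
        have := lip 0 h0m z hz1
        have habs : |z - 0| ≤ ε := by
          rw [sub_zero, abs_of_nonneg hz.1]; exact hz.2
        calc ‖deriv g z - deriv g 0‖ ≤ M0 * |z - 0| := this
          _ ≤ M0 * ε := by nlinarith)
      (left_mem_Icc.mpr hε0.le) (right_mem_Icc.mpr hε0.le)
    have heq : g ε - ε • deriv g 0 - (g 0 - (0:ℝ) • deriv g 0)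
        = g ε - g 0 - ε • deriv g 0 := by
      rw [zero_smul, sub_zero]; abel
    rw [heq] at key
    calc ‖g ε - g 0 - ε • deriv g 0‖ ≤ M0 * ε * ‖ε - 0‖ := key
      _ = M0 * ε ^ 2 := by
        rw [sub_zero, Real.norm_eq_abs, abs_of_pos hε0]; ring
  · have key := (convex_Icc (-ε:ℝ) 0).norm_image_sub_le_of_norm_hasDerivWithin_le
      (f := fun t : ℝ => g t - t • deriv g 0) (f' := fun t => deriv g t - deriv g 0)
      (C := M0 * ε)
      (fun z hz => (hderivh z).hasDerivWithinAt)
      (fun z hz => by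
        have hz1 : z ∈ Icc (-1:ℝ) 1 := ⟨by linarith [hz.1], by linarith [hz.2]⟩
        have := lip 0 h0m z hz1
        have habs : |z - 0| ≤ ε := by
          rw [sub_zero, abs_le]; exact ⟨hz.1, by linarith [hz.2]⟩
        calc ‖deriv g z - deriv g 0‖ ≤ M0 * |z - 0| := this
          _ ≤ M0 * ε := by nlinarith)
      (right_mem_Icc.mpr (by linarith)) (left_mem_Icc.mpr (by linarith))
    have heq : g (-ε) - (-ε:ℝ) • deriv g 0 - (g 0 - (0:ℝ) • deriv g 0)
        = g (-ε) - g 0 + ε • deriv g 0 := by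
      rw [zero_smul, sub_zero, neg_smul]; abel
    rw [heq] at key
    calc ‖g (-ε) - g 0 + ε • deriv g 0‖ ≤ M0 * ε * ‖-ε - 0‖ := key
      _ = M0 * ε ^ 2 := by
        rw [sub_zero, Real.norm_eq_abs, abs_neg, abs_of_pos hε0]; ring

/-- **Second-order estimate for cubic Hermite smoothing (Lemma `firstorder`, part 3).**
With `g₋, g₊, F` as before, there is `C > 0` such that for every `ε ∈ (0,1]`, every
cubic Hermite interpolant `P` of `F` on `[−ε, ε]`, and every `a ∈ [−ε, ε]`,
`‖P''(a) − (1/(2ε)) • (g₊'(0) − g₋'(0))‖ ≤ C`. -/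
theorem cubic_hermite_second_deriv_estimate
    {E : Type*} [NormedAddCommGroup E] [NormedSpace ℝ E]
    (gm gp : ℝ → E) (hgm : ContDiff ℝ 2 gm) (hgp : ContDiff ℝ 2 gp)
    (h0 : gm 0 = gp 0)
    (F : ℝ → E) (hFm : ∀ a : ℝ, a ≤ 0 → F a = gm a) (hFp : ∀ a : ℝ, 0 ≤ a → F a = gp a) :
    ∃ C > 0, ∀ ε ∈ Set.Ioc (0 : ℝ) 1, ∀ P : ℝ → E,
      ((∃ c : Fin 4 → E, ∀ a : ℝ, P a = ∑ j : Fin 4, a ^ (j : ℕ) • c j) ∧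
        P (-ε) = F (-ε) ∧ P ε = F ε ∧
        deriv P (-ε) = deriv gm (-ε) ∧ deriv P ε = deriv gp ε) →
      ∀ a ∈ Set.Icc (-ε) ε,
        ‖iteratedDeriv 2 P a - (1 / (2 * ε)) • (deriv gp 0 - deriv gm 0)‖ ≤ C := by
  obtain ⟨Mm, hMm0, hMm⟩ := taylor_aux' gm hgm
  obtain ⟨Mp, hMp0, hMp⟩ := taylor_aux' gp hgp
  refine ⟨4 * (Mm + Mp), by positivity, ?_⟩
  rintro ε hε P ⟨⟨c, hc⟩, hPm, hPp, hDm, hDp⟩ a ha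
  obtain ⟨hε0, hε1⟩ := hε
  have hεne : ε ≠ 0 := ne_of_gt hε0
  have hPeq : P = fun x : ℝ => c 0 + x • c 1 + x ^ 2 • c 2 + x ^ 3 • c 3 := by
    funext x
    rw [hc x, Fin.sum_univ_four]
    norm_num [Fin.isValue, show ((0:Fin 4):ℕ) = 0 from rfl, show ((1:Fin 4):ℕ) = 1 from rfl,
      show ((2:Fin 4):ℕ) = 2 from rfl, show ((3:Fin 4):ℕ) = 3 from rfl]
  have hP1 : ∀ x : ℝ, HasDerivAt P (c 1 + (2 * x) • c 2 + (3 * x ^ 2) • c 3) x := by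
    intro x
    rw [hPeq]
    have hd0 : HasDerivAt (fun _ : ℝ => c 0) 0 x := hasDerivAt_const x _
    have hd1 : HasDerivAt (fun y : ℝ => y • c 1) ((1:ℝ) • c 1) x :=
      (hasDerivAt_id x).smul_const _
    have hd2 : HasDerivAt (fun y : ℝ => y ^ 2 • c 2) ((2 * x ^ 1) • c 2) x := by
      simpa using (hasDerivAt_pow 2 x).smul_const (c 2)
    have hd3 : HasDerivAt (fun y : ℝ => y ^ 3 • c 3) ((3 * x ^ 2) • c 3) x := by
      simpa using (hasDerivAt_pow 3 x).smul_const (c 3)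
    have := ((hd0.add hd1).add hd2).add hd3
    convert this using 1
    · rfl
    module
  have hderivP : deriv P = fun x : ℝ => c 1 + (2 * x) • c 2 + (3 * x ^ 2) • c 3 :=
    funext fun x => (hP1 x).deriv
  have hP2 : ∀ x : ℝ, HasDerivAt (deriv P) ((2:ℝ) • c 2 + (6 * x) • c 3) x := by
    intro x
    rw [hderivP]
    have hd1 : HasDerivAt (fun _ : ℝ => c 1) 0 x := hasDerivAt_const x _
    have hd2 : HasDerivAt (fun y : ℝ => (2 * y) • c 2) ((2:ℝ) • c 2) x := by
      simpa using ((hasDerivAt_id x).const_mul 2).smul_const (c 2)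
    have hd3 : HasDerivAt (fun y : ℝ => (3 * y ^ 2) • c 3) ((6 * x) • c 3) x := by
      have := ((hasDerivAt_pow 2 x).const_mul 3).smul_const (c 3)
      convert this using 1
      module
    have := (hd1.add hd2).add hd3
    convert this using 1
    · rfl
    module
  have hiter : iteratedDeriv 2 P a = (2:ℝ) • c 2 + (6 * a) • c 3 := by
    have h21 : iteratedDeriv 2 P = deriv (deriv P) := by
      rw [show (2:ℕ) = 1 + 1 from rfl, iteratedDeriv_succ, iteratedDeriv_one]
    rw [h21]
    exact (hP2 a).deriv
  have hFmε : F (-ε) = gm (-ε) := hFm _ (by linarith)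
  have hFpε : F ε = gp ε := hFp _ hε0.le
  have e1 : c 0 + (-ε) • c 1 + (-ε) ^ 2 • c 2 + (-ε) ^ 3 • c 3 = gm (-ε) := by
    rw [← hFmε, ← hPm, hPeq]
  have e2 : c 0 + ε • c 1 + ε ^ 2 • c 2 + ε ^ 3 • c 3 = gp ε := by
    rw [← hFpε, ← hPp, hPeq]
  have e3 : c 1 + (2 * -ε) • c 2 + (3 * (-ε) ^ 2) • c 3 = deriv gm (-ε) := by
    rw [← hDm, hderivP]
  have e4 : c 1 + (2 * ε) • c 2 + (3 * ε ^ 2) • c 3 = deriv gp ε := by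
    rw [← hDp, hderivP]
  have key1 : deriv gp ε - deriv gm (-ε) = (4 * ε) • c 2 := by
    rw [← e3, ← e4]; module
  have key2 : ε • (deriv gp ε + deriv gm (-ε)) - (gp ε - gm (-ε)) = (4 * ε ^ 3) • c 3 := by
    rw [← e1, ← e2, ← e3, ← e4]; module
  have idA : iteratedDeriv 2 P a - (1 / (2 * ε)) • (deriv gp 0 - deriv gm 0)
      = (1 / (2 * ε)) • ((deriv gp ε - deriv gm (-ε)) - (deriv gp 0 - deriv gm 0))
        + (3 * a / (2 * ε ^ 3)) • (ε • (deriv gp ε + deriv gm (-ε)) - (gp ε - gm (-ε))) := by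
    rw [hiter, key1, key2]
    match_scalars <;> field_simp <;> ring
  rw [idA]
  obtain ⟨bp1, bp2, bp3, bp4⟩ := hMp ε ⟨hε0, hε1⟩
  obtain ⟨bm1, bm2, bm3, bm4⟩ := hMm ε ⟨hε0, hε1⟩
  have hU : ‖(deriv gp ε - deriv gm (-ε)) - (deriv gp 0 - deriv gm 0)‖ ≤ (Mm + Mp) * ε := by
    have hid : (deriv gp ε - deriv gm (-ε)) - (deriv gp 0 - deriv gm 0)
        = (deriv gp ε - deriv gp 0) - (deriv gm (-ε) - deriv gm 0) := by abel
    rw [hid]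
    calc ‖(deriv gp ε - deriv gp 0) - (deriv gm (-ε) - deriv gm 0)‖
        ≤ ‖deriv gp ε - deriv gp 0‖ + ‖deriv gm (-ε) - deriv gm 0‖ := norm_sub_le _ _
      _ ≤ Mp * ε + Mm * ε := add_le_add bp1 bm2
      _ = (Mm + Mp) * ε := by ring
  have hW : ‖ε • (deriv gp ε + deriv gm (-ε)) - (gp ε - gm (-ε))‖
      ≤ 2 * (Mm + Mp) * ε ^ 2 := by
    have hz : gp 0 - gm 0 = 0 := by rw [h0, sub_self]
    have hid : ε • (deriv gp ε + deriv gm (-ε)) - (gp ε - gm (-ε))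
        = ε • (deriv gp ε - deriv gp 0) + ε • (deriv gm (-ε) - deriv gm 0)
          - (gp ε - gp 0 - ε • deriv gp 0) + (gm (-ε) - gm 0 + ε • deriv gm 0)
          - (gp 0 - gm 0) := by module
    rw [hid, hz, sub_zero]
    have n1 : ‖ε • (deriv gp ε - deriv gp 0)‖ ≤ Mp * ε ^ 2 := by
      rw [norm_smul, Real.norm_eq_abs, abs_of_pos hε0]
      nlinarith [norm_nonneg (deriv gp ε - deriv gp 0)]
    have n2 : ‖ε • (deriv gm (-ε) - deriv gm 0)‖ ≤ Mm * ε ^ 2 := by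
      rw [norm_smul, Real.norm_eq_abs, abs_of_pos hε0]
      nlinarith [norm_nonneg (deriv gm (-ε) - deriv gm 0)]
    calc ‖ε • (deriv gp ε - deriv gp 0) + ε • (deriv gm (-ε) - deriv gm 0)
          - (gp ε - gp 0 - ε • deriv gp 0) + (gm (-ε) - gm 0 + ε • deriv gm 0)‖
        ≤ ‖ε • (deriv gp ε - deriv gp 0) + ε • (deriv gm (-ε) - deriv gm 0)
          - (gp ε - gp 0 - ε • deriv gp 0)‖ + ‖gm (-ε) - gm 0 + ε • deriv gm 0‖ :=
          norm_add_le _ _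
      _ ≤ ‖ε • (deriv gp ε - deriv gp 0) + ε • (deriv gm (-ε) - deriv gm 0)‖
          + ‖gp ε - gp 0 - ε • deriv gp 0‖ + ‖gm (-ε) - gm 0 + ε • deriv gm 0‖ := by
          have := norm_sub_le (ε • (deriv gp ε - deriv gp 0)
            + ε • (deriv gm (-ε) - deriv gm 0)) (gp ε - gp 0 - ε • deriv gp 0)
          linarith
      _ ≤ ‖ε • (deriv gp ε - deriv gp 0)‖ + ‖ε • (deriv gm (-ε) - deriv gm 0)‖
          + ‖gp ε - gp 0 - ε • deriv gp 0‖ + ‖gm (-ε) - gm 0 + ε • deriv gm 0‖ := by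
          have := norm_add_le (ε • (deriv gp ε - deriv gp 0))
            (ε • (deriv gm (-ε) - deriv gm 0))
          linarith
      _ ≤ Mp * ε ^ 2 + Mm * ε ^ 2 + Mp * ε ^ 2 + Mm * ε ^ 2 := by
          linarith [n1, n2, bp3, bm4]
      _ = 2 * (Mm + Mp) * ε ^ 2 := by ring
  have hnorm1 : ‖(1 / (2 * ε)) • ((deriv gp ε - deriv gm (-ε)) - (deriv gp 0 - deriv gm 0))‖
      ≤ (Mm + Mp) / 2 := by
    rw [norm_smul, Real.norm_eq_abs, abs_of_pos (by positivity)]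
    calc (1 / (2 * ε)) * ‖(deriv gp ε - deriv gm (-ε)) - (deriv gp 0 - deriv gm 0)‖
        ≤ (1 / (2 * ε)) * ((Mm + Mp) * ε) :=
          mul_le_mul_of_nonneg_left hU (by positivity)
      _ = (Mm + Mp) / 2 := by field_simp
  have hnorm2 : ‖(3 * a / (2 * ε ^ 3)) • (ε • (deriv gp ε + deriv gm (-ε))
      - (gp ε - gm (-ε)))‖ ≤ 3 * (Mm + Mp) := by
    rw [norm_smul, Real.norm_eq_abs]
    have haabs : |a| ≤ ε := abs_le.mpr ⟨ha.1, ha.2⟩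
    have habs : |3 * a / (2 * ε ^ 3)| ≤ 3 / (2 * ε ^ 2) := by
      rw [abs_div, abs_of_pos (by positivity : (0:ℝ) < 2 * ε ^ 3), abs_mul,
        abs_of_nonneg (by norm_num : (0:ℝ) ≤ 3)]
      rw [div_le_div_iff₀ (by positivity) (by positivity)]
      nlinarith
    calc |3 * a / (2 * ε ^ 3)| * ‖ε • (deriv gp ε + deriv gm (-ε)) - (gp ε - gm (-ε))‖
        ≤ (3 / (2 * ε ^ 2)) * (2 * (Mm + Mp) * ε ^ 2) :=
          mul_le_mul habs hW (norm_nonneg _) (by positivity)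
      _ = 3 * (Mm + Mp) := by field_simp
  calc ‖(1 / (2 * ε)) • ((deriv gp ε - deriv gm (-ε)) - (deriv gp 0 - deriv gm 0))
        + (3 * a / (2 * ε ^ 3)) • (ε • (deriv gp ε + deriv gm (-ε)) - (gp ε - gm (-ε)))‖
      ≤ ‖(1 / (2 * ε)) • ((deriv gp ε - deriv gm (-ε)) - (deriv gp 0 - deriv gm 0))‖
        + ‖(3 * a / (2 * ε ^ 3)) • (ε • (deriv gp ε + deriv gm (-ε)) - (gp ε - gm (-ε)))‖ :=
        norm_add_le _ _
    _ ≤ (Mm + Mp) / 2 + 3 * (Mm + Mp) := add_le_add hnorm1 hnorm2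
    _ ≤ 4 * (Mm + Mp) := by linarith
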